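/- arXiv:1810.05035 — 2 statements merged into one kernel-verified Lean document; each statement's English description precedes it below -/
import Mathlib

section
/- For every ordinal α, the following are equivalent: (1) there exists a countably complete tail-uniform ultrafilter on α; (2) the cofinality cf(α) is a Fréchet cardinal, i.e., there exists a countably complete Fréchet uniform ultrafilter on cf(α). -/
/-- An ultrafilter is countably complete if every countable family of sets in it
has its intersection in it. -/
def CountablyComplete {X : Type*} (U : Ultrafilter X) : Prop :=
  ∀ s : Set (Set X), s.Countable → (∀ t ∈ s, t ∈ U) → ⋂₀ s ∈ U

/-- An ultrafilter on a set `X` is Fréchet uniform if every set in it has full cardinality. -/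
def FrechetUniform {X : Type*} (U : Ultrafilter X) : Prop :=
  ∀ A ∈ U, Cardinal.mk A = Cardinal.mk X

/-- A cardinal is Fréchet if it carries a countably complete Fréchet uniform ultrafilter. -/
def IsFrechet (l : Cardinal) : Prop :=
  ∃ U : Ultrafilter l.out, CountablyComplete U ∧ FrechetUniform U

/-- An ultrafilter on the ordinal `α` is tail uniform if every final segment of `α`
belongs to it. -/
def TailUniform {α : Ordinal} (U : Ultrafilter ↥(Set.Iio α)) : Prop :=
  ∀ β < α, {ξ : ↥(Set.Iio α) | β ≤ ξ.1} ∈ U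

theorem countablyComplete_map {X Y : Type*} {U : Ultrafilter X} (h : CountablyComplete U)
    (g : X → Y) : CountablyComplete (U.map g) := by
  intro s hs hmem
  rw [Ultrafilter.mem_map, Set.preimage_sInter, ← Set.sInter_image]
  refine h _ (hs.image _) ?_
  rintro t ⟨u, hu, rfl⟩
  exact Ultrafilter.mem_map.1 (hmem u hu)

theorem countablyComplete_pure {X : Type*} (a : X) :
    CountablyComplete (pure a : Ultrafilter X) := by
  intro s _ hmem
  rw [Ultrafilter.mem_pure]
  exact Set.mem_sInter.2 fun t ht => Ultrafilter.mem_pure.1 (hmem t ht)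

/-- An ordinal carries a countably complete tail-uniform ultrafilter if and only if
its cofinality is a Fréchet cardinal. -/
theorem statement0 (α : Ordinal) :
    (∃ U : Ultrafilter ↥(Set.Iio α), CountablyComplete U ∧ TailUniform U) ↔
      IsFrechet α.cof := by
  rcases Ordinal.zero_or_succ_or_isSuccLimit α with rfl | ⟨β, rfl⟩ | hlim
  · -- zero case: both sides false
    rw [Ordinal.cof_zero]
    constructor
    · rintro ⟨V, -, -⟩
      obtain ⟨⟨x, hx⟩⟩ := Filter.nonempty_of_neBot (V : Filter ↥(Set.Iio (0:Ordinal)))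
      exact absurd hx (not_lt_zero (a := x))
    · rintro ⟨U, -, -⟩
      have he : IsEmpty ((0 : Cardinal).out) :=
        Cardinal.mk_eq_zero_iff.1 (by simp)
      obtain ⟨x⟩ := Filter.nonempty_of_neBot (U : Filter ((0:Cardinal).out))
      exact he.elim x
  · -- successor case: both sides true
    rw [Ordinal.cof_succ]
    refine iff_of_true ⟨pure ⟨β, Order.lt_succ β⟩, countablyComplete_pure _, ?_⟩ ?_
    · intro γ hγ
      rw [Ultrafilter.mem_pure]
      exact Order.lt_succ_iff.1 hγ
    · have h1 : Cardinal.mk ((1 : Cardinal).out) = 1 := by simp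
      obtain ⟨hsub, ⟨a⟩⟩ := Cardinal.eq_one_iff_unique.1 h1
      refine ⟨pure a, countablyComplete_pure _, ?_⟩
      intro A hA
      have ha : a ∈ A := Ultrafilter.mem_pure.1 hA
      have : A = Set.univ := Set.eq_univ_of_forall fun x => by rwa [Subsingleton.elim x a]
      rw [this, Cardinal.mk_univ]
  · -- limit case
    set κ := α.cof with hκ
    obtain ⟨f, hf⟩ := Ordinal.exists_fundamental_sequence α
    set F : ↥(Set.Iio κ.ord) → Ordinal := fun y => f y.1 y.2 with hF
    have hFval : ∀ y, F y < α := fun y => by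
      conv_rhs => rw [← hf.blsub_eq]
      exact Ordinal.lt_blsub f y.1 y.2
    have he : Nonempty (κ.out ≃ ↥(Set.Iio κ.ord)) := by
      rw [← Cardinal.lift_mk_eq']
      simp [Ordinal.mk_Iio_ordinal, Cardinal.lift_lift]
    obtain ⟨e⟩ := he
    constructor
    · rintro ⟨V, hVcc, hVtail⟩
      have hex : ∀ ξ : ↥(Set.Iio α), ∃ b, ∃ hb : b < κ.ord, ξ.1 ≤ f b hb := fun ξ => by
        have : ξ.1 < Ordinal.blsub κ.ord f := by rw [hf.blsub_eq]; exact ξ.2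
        exact Ordinal.lt_blsub_iff.1 this
      set hmap : ↥(Set.Iio α) → κ.out :=
        fun ξ => e.symm ⟨(hex ξ).choose, (hex ξ).choose_spec.choose⟩ with hhmap
      refine ⟨V.map hmap, countablyComplete_map hVcc hmap, ?_⟩
      intro A hA
      rw [Cardinal.mk_out]
      refine le_antisymm ((Cardinal.mk_set_le A).trans_eq (Cardinal.mk_out κ)) ?_
      by_contra hlt'
      rw [not_le] at hlt'
      set g : ↥A → Ordinal := fun a => Order.succ (F (e a.1)) with hg
      have hsup : iSup g < α := by
        apply Ordinal.iSup_lt_ord hlt'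
        intro a
        exact hlim.succ_lt (hFval _)
      have htail := hVtail _ hsup
      have hT : hmap ⁻¹' A ∈ V := Ultrafilter.mem_map.1 hA
      obtain ⟨ξ, hξA, hξtail⟩ := Ultrafilter.nonempty_of_mem (Filter.inter_mem hT htail)
      have h1 : ξ.1 ≤ f (hex ξ).choose (hex ξ).choose_spec.choose :=
        (hex ξ).choose_spec.choose_spec
      have h2 : e (hmap ξ) = ⟨(hex ξ).choose, (hex ξ).choose_spec.choose⟩ := by
        simp [hhmap]
      have h3 : g ⟨hmap ξ, hξA⟩ = Order.succ (f (hex ξ).choose (hex ξ).choose_spec.choose) := by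
        rw [hg]
        simp only [h2, hF]
      have h4 : g ⟨hmap ξ, hξA⟩ ≤ iSup g := Ordinal.le_iSup g _
      have hlt2 : ξ.1 < iSup g := by
        refine lt_of_lt_of_le ?_ h4
        rw [h3]
        exact Order.lt_succ_iff.2 h1
      exact absurd hξtail (not_le.2 hlt2)
    · rintro ⟨U, hUcc, hUF⟩
      set gmap : κ.out → ↥(Set.Iio α) := fun x => ⟨F (e x), hFval (e x)⟩ with hgmap
      refine ⟨U.map gmap, countablyComplete_map hUcc gmap, ?_⟩
      intro β hβ
      rw [Ultrafilter.mem_map]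
      have hb0 : ∃ b, ∃ hb : b < κ.ord, β ≤ f b hb :=
        Ordinal.lt_blsub_iff.1 (by rw [hf.blsub_eq]; exact hβ)
      obtain ⟨b0, hb0lt, hb0le⟩ := hb0
      by_contra hC
      have hCmem : (gmap ⁻¹' {ξ : ↥(Set.Iio α) | β ≤ ξ.1})ᶜ ∈ U :=
        Ultrafilter.compl_mem_iff_notMem.2 hC
      have hcard := hUF _ hCmem
      have hinj : Nonempty
          ((↥(gmap ⁻¹' {ξ : ↥(Set.Iio α) | β ≤ ξ.1})ᶜ) ↪ ↥(Set.Iio b0)) := by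
        refine ⟨⟨fun x => ⟨(e x.1).1, ?_⟩, ?_⟩⟩
        · by_contra hge
          simp only [Set.mem_Iio, not_lt] at hge
          have hmono : f b0 hb0lt ≤ F (e x.1) := hf.monotone hb0lt (e x.1).2 hge
          have hx : ¬ β ≤ F (e x.1) := x.2
          exact hx (hb0le.trans hmono)
        · intro x y hxy
          have h1 := congrArg Subtype.val hxy
          simp only at h1
          exact Subtype.ext (e.injective (Subtype.ext h1))
      have hle : Cardinal.mk (↥(gmap ⁻¹' {ξ : ↥(Set.Iio α) | β ≤ ξ.1})ᶜ) ≤ b0.card := by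
        have h' := Cardinal.lift_mk_le'.2 hinj
        rw [Ordinal.mk_Iio_ordinal, Cardinal.lift_lift] at h'
        exact Cardinal.lift_le.1 h'
      rw [hcard, Cardinal.mk_out] at hle
      exact absurd (Cardinal.lt_ord.1 hb0lt) (not_lt.2 hle)
end

section
/- Suppose δ is a regular cardinal and U is an ultrafilter on a set X that is λ-indecomposable for every cardinal λ with δ ≤ λ ≤ 2^δ. Then there exists a partition P of X with |P| < δ that is maximal among partitions of size at most 2^δ: for every partition Q of X with |Q| ≤ 2^δ that refines P, there exists A ∈ U such that P↾A = Q↾A. -/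
universe u

/-- A partition `Q` refines a partition `P` if every piece of `Q` is contained in a
piece of `P`. -/
def Refines {X : Type*} (Q P : Set (Set X)) : Prop :=
  ∀ s ∈ Q, ∃ t ∈ P, s ⊆ t

/-- The restriction of a partition `P` of `X` to a subset `A ⊆ X`:
`P↾A = {A ∩ S : S ∈ P, A ∩ S ≠ ∅}`. -/
def restrictPart {X : Type*} (P : Set (Set X)) (A : Set X) : Set (Set X) :=
  {s | ∃ S ∈ P, s = A ∩ S ∧ s ≠ ∅}

/-- An ultrafilter `U` on `X` is `λ`-indecomposable if every partition of `X` into at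
most `λ` pieces restricts to fewer than `λ` pieces on some set in `U`. -/
def Indecomposable {X : Type u} (U : Ultrafilter X) (l : Cardinal.{u}) : Prop :=
  ∀ P : Set (Set X), Setoid.IsPartition P → Cardinal.mk P ≤ l →
    ∃ A ∈ U, Cardinal.mk (restrictPart P A) < l

namespace Silver
open Cardinal Set

variable {X : Type u}

theorem refines_refl (P : Set (Set X)) : Refines P P := fun s hs => ⟨s, hs, subset_rfl⟩

theorem refines_trans {P Q R : Set (Set X)} (h1 : Refines P Q) (h2 : Refines Q R) :
    Refines P R := by
  intro s hs
  obtain ⟨t, ht, hst⟩ := h1 s hs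
  obtain ⟨u, hu, htu⟩ := h2 t ht
  exact ⟨u, hu, hst.trans htu⟩

/-- `P` is a partition of the set `A`. -/
def PartOn (A : Set X) (P : Set (Set X)) : Prop :=
  ∅ ∉ P ∧ (∀ s ∈ P, s ⊆ A) ∧ ∀ a ∈ A, ∃! s, s ∈ P ∧ a ∈ s

theorem PartOn.eq_of_mem {A : Set X} {P : Set (Set X)} (hP : PartOn A P) {s t : Set X}
    (hs : s ∈ P) (ht : t ∈ P) {a : X} (has : a ∈ s) (hat : a ∈ t) : s = t := by
  obtain ⟨u, _, hu⟩ := hP.2.2 a (hP.2.1 s hs has)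
  rw [hu s ⟨hs, has⟩, hu t ⟨ht, hat⟩]

theorem partOn_restrict {P : Set (Set X)} (hP : Setoid.IsPartition P) (A : Set X) :
    PartOn A (restrictPart P A) := by
  refine ⟨?_, ?_, ?_⟩
  · rintro ⟨S, _, _, hne⟩; exact hne rfl
  · rintro s ⟨S, _, rfl, _⟩; exact inter_subset_left
  · intro a ha
    obtain ⟨S, ⟨hS, haS⟩, hSu⟩ := hP.2 a
    refine ⟨A ∩ S, ⟨⟨S, hS, rfl, ?_⟩, ⟨ha, haS⟩⟩, ?_⟩
    · exact nonempty_iff_ne_empty.1 ⟨a, ha, haS⟩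
    · rintro t ⟨⟨T, hT, rfl, _⟩, hat⟩
      rw [hSu T ⟨hT, hat.2⟩]

theorem restrict_restrict {P : Set (Set X)} {A B : Set X} (h : B ⊆ A) :
    restrictPart (restrictPart P A) B = restrictPart P B := by
  ext s
  have hBS : ∀ S : Set X, B ∩ (A ∩ S) = B ∩ S := fun S => by
    rw [← inter_assoc, inter_eq_self_of_subset_left h]
  constructor
  · rintro ⟨t, ⟨S, hS, rfl, _⟩, rfl, hne⟩
    exact ⟨S, hS, hBS S, (hBS S) ▸ hne⟩
  · rintro ⟨S, hS, rfl, hne⟩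
    refine ⟨A ∩ S, ⟨S, hS, rfl, fun he => hne ?_⟩, (hBS S).symm, hne⟩
    rw [← hBS S, he, inter_empty]

theorem mk_restrict_mono (P : Set (Set X)) {A B : Set X} (h : B ⊆ A) :
    #(restrictPart P B) ≤ #(restrictPart P A) := by
  have hsub : restrictPart P B ⊆ (fun t => B ∩ t) '' restrictPart P A := by
    rintro s ⟨S, hS, rfl, hne⟩
    have hBS : B ∩ (A ∩ S) = B ∩ S := by
      rw [← inter_assoc, inter_eq_self_of_subset_left h]
    exact ⟨A ∩ S, ⟨S, hS, rfl, fun he => hne (by rw [← hBS, he, inter_empty])⟩, hBS⟩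
  exact (mk_le_mk_of_subset hsub).trans mk_image_le

theorem refines_restrict {P Q : Set (Set X)} (h : Refines Q P) (A : Set X) :
    Refines (restrictPart Q A) (restrictPart P A) := by
  rintro s ⟨S, hS, rfl, hne⟩
  obtain ⟨T, hT, hST⟩ := h S hS
  refine ⟨A ∩ T, ⟨T, hT, rfl, fun he => hne ?_⟩, inter_subset_inter_right A hST⟩
  exact eq_empty_of_subset_empty (he ▸ inter_subset_inter_right A hST)

theorem partOn_antisymm {A : Set X} {P Q : Set (Set X)} (hP : PartOn A P) (hQ : PartOn A Q)
    (h1 : Refines Q P) (h2 : Refines P Q) : P = Q := by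
  have key : ∀ s ∈ Q, s ∈ P := by
    intro s hs
    obtain ⟨t, ht, hst⟩ := h1 s hs
    obtain ⟨s', hs', hts'⟩ := h2 t ht
    obtain ⟨a, ha⟩ : s.Nonempty := nonempty_iff_ne_empty.2 fun he => hQ.1 (he ▸ hs)
    have hss' : s = s' := hQ.eq_of_mem hs hs' ha (hts' (hst ha))
    have hst2 : s = t := subset_antisymm hst (hts'.trans hss'.symm.subset)
    rwa [hst2]
  have key' : ∀ s ∈ P, s ∈ Q := by
    intro s hs
    obtain ⟨t, ht, hst⟩ := h2 s hs
    obtain ⟨s', hs', hts'⟩ := h1 t ht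
    obtain ⟨a, ha⟩ : s.Nonempty := nonempty_iff_ne_empty.2 fun he => hP.1 (he ▸ hs)
    have hss' : s = s' := hP.eq_of_mem hs hs' ha (hts' (hst ha))
    have hst2 : s = t := subset_antisymm hst (hts'.trans hss'.symm.subset)
    rwa [hst2]
  exact Set.Subset.antisymm key' key


/-- If `Q` refines `P` on `A` but `Q ≠ P`, two points lie in the same `P`-piece but
different `Q`-pieces. -/
theorem exists_split {A : Set X} {P Q : Set (Set X)} (hP : PartOn A P) (hQ : PartOn A Q)
    (href : Refines Q P) (hne : Q ≠ P) :
    ∃ x ∈ A, ∃ y ∈ A, (∃ t ∈ P, x ∈ t ∧ y ∈ t) ∧ ∀ s ∈ Q, ¬(x ∈ s ∧ y ∈ s) := by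
  have h2 : ¬Refines P Q := fun h => hne (partOn_antisymm hP hQ href h).symm
  unfold Refines at h2
  push_neg at h2
  obtain ⟨t, ht, htQ⟩ := h2
  obtain ⟨x, hx⟩ : t.Nonempty := nonempty_iff_ne_empty.2 fun he => hP.1 (he ▸ ht)
  have hxA : x ∈ A := hP.2.1 t ht hx
  obtain ⟨q, ⟨hq, hxq⟩, _⟩ := hQ.2.2 x hxA
  obtain ⟨p, hp, hqp⟩ := href q hq
  have hpt : p = t := hP.eq_of_mem hp ht (hqp hxq) hx
  have hqt : q ⊆ t := hpt ▸ hqp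
  obtain ⟨y, hyt, hyq⟩ : ∃ y, y ∈ t ∧ y ∉ q := not_subset.1 (htQ q hq)
  refine ⟨x, hxA, y, hP.2.1 t ht hyt, ⟨t, ht, hx, hyt⟩, ?_⟩
  rintro s hs ⟨hxs, hys⟩
  exact hyq ((hQ.eq_of_mem hs hq hxs hxq) ▸ hys)

/-- Extend the restriction of `P` to `A` to a partition of `X` by adding `Aᶜ`. -/
def extendPart (P : Set (Set X)) (A : Set X) : Set (Set X) :=
  restrictPart P A ∪ ({Aᶜ} \ {∅})

theorem isPartition_extendPart {P : Set (Set X)} (hP : Setoid.IsPartition P) (A : Set X) :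
    Setoid.IsPartition (extendPart P A) := by
  constructor
  · rintro (⟨S, _, _, hne⟩ | ⟨_, hne⟩)
    · exact hne rfl
    · exact hne rfl
  · intro a
    by_cases ha : a ∈ A
    · obtain ⟨S, ⟨hS, haS⟩, hSu⟩ := hP.2 a
      refine ⟨A ∩ S, ⟨Or.inl ⟨S, hS, rfl, nonempty_iff_ne_empty.1 ⟨a, ha, haS⟩⟩, ha, haS⟩, ?_⟩
      rintro s ⟨(⟨T, hT, rfl, _⟩ | ⟨hs, _⟩), hmem⟩
      · rw [hSu T ⟨hT, hmem.2⟩]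
      · exact absurd ha (hs ▸ hmem : a ∈ Aᶜ)
    · refine ⟨Aᶜ, ⟨Or.inr ⟨rfl, nonempty_iff_ne_empty.1 ⟨a, ha⟩⟩, ha⟩, ?_⟩
      rintro s ⟨(⟨T, hT, rfl, _⟩ | ⟨hs, _⟩), hmem⟩
      · exact absurd hmem.1 ha
      · exact hs
    
theorem mk_extendPart_le (P : Set (Set X)) (A : Set X) :
    #(extendPart P A) ≤ #(restrictPart P A) + 1 := by
  refine (mk_union_le _ _).trans ?_
  have : #(({Aᶜ} \ {∅} : Set (Set X))) ≤ 1 := by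
    refine (mk_le_mk_of_subset (diff_subset)).trans ?_
    simp
  exact add_le_add_right this _

theorem restrict_extendPart {P : Set (Set X)} {A D : Set X} (h : D ⊆ A) :
    restrictPart (extendPart P A) D = restrictPart P D := by
  ext s
  have hDS : ∀ S : Set X, D ∩ (A ∩ S) = D ∩ S := fun S => by
    rw [← inter_assoc, inter_eq_self_of_subset_left h]
  constructor
  · rintro ⟨t, (⟨S, hS, rfl, _⟩ | ⟨ht, _⟩), rfl, hne⟩
    · exact ⟨S, hS, hDS S, (hDS S) ▸ hne⟩
    · subst ht
      refine absurd ?_ hne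
      rw [← subset_empty_iff]
      intro x ⟨hxD, hxA⟩
      exact absurd (h hxD) hxA
  · rintro ⟨S, hS, rfl, hne⟩
    refine ⟨A ∩ S, Or.inl ⟨S, hS, rfl, fun he => hne (by rw [← hDS S, he, inter_empty])⟩,
      (hDS S).symm, hne⟩


/-- The common refinement of a family of partitions. -/
def commonRef {ι : Type u} (f : ι → Set (Set X)) : Set (Set X) :=
  {s | s ≠ ∅ ∧ ∃ c : ι → Set X, (∀ i, c i ∈ f i) ∧ s = ⋂ i, c i}

theorem isPartition_commonRef {ι : Type u} {f : ι → Set (Set X)}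
    (hf : ∀ i, Setoid.IsPartition (f i)) : Setoid.IsPartition (commonRef f) := by
  constructor
  · rintro ⟨hne, _⟩; exact hne rfl
  · intro a
    choose c hc hu using fun i => (hf i).2 a
    obtain ⟨hc, hac⟩ := forall_and.1 fun i => hc i
    refine ⟨⋂ i, c i, ⟨⟨?_, c, hc, rfl⟩, mem_iInter.2 hac⟩, ?_⟩
    · exact nonempty_iff_ne_empty.1 ⟨a, mem_iInter.2 hac⟩
    · rintro s ⟨⟨_, d, hd, rfl⟩, has⟩
      have : ∀ i, d i = c i := fun i => hu i (d i) ⟨hd i, mem_iInter.1 has i⟩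
      simp only [this]

theorem commonRef_refines {ι : Type u} (f : ι → Set (Set X)) (i : ι) :
    Refines (commonRef f) (f i) := by
  rintro s ⟨hne, c, hc, rfl⟩
  exact ⟨c i, hc i, iInter_subset c i⟩

theorem mk_commonRef_le {ι : Type u} (f : ι → Set (Set X)) {κ : Cardinal.{u}}
    (hκ : ∀ i, #(f i) ≤ κ) : #(commonRef f) ≤ κ ^ #ι := by
  have hsub : commonRef f ⊆ Set.range (fun c : ∀ i, (f i : Set (Set X)) => ⋂ i, (c i : Set X)) := by
    rintro s ⟨hne, c, hc, rfl⟩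
    exact ⟨fun i => ⟨c i, hc i⟩, rfl⟩
  refine ((mk_le_mk_of_subset hsub).trans mk_range_le).trans ?_
  rw [mk_pi]
  calc Cardinal.prod (fun i => #(f i)) ≤ Cardinal.prod (fun _ : ι => κ) :=
        Cardinal.prod_le_prod _ _ hκ
    _ = κ ^ #ι := by rw [Cardinal.prod_const, Cardinal.lift_id, Cardinal.lift_id]


theorem restrict_refines_self (P : Set (Set X)) (A : Set X) : Refines (restrictPart P A) P := by
  rintro s ⟨S, hS, rfl, _⟩; exact ⟨S, hS, inter_subset_right⟩
theorem piece_mono {P₁ P₂ : Set (Set X)} (hP₁ : Setoid.IsPartition P₁) (href : Refines P₂ P₁)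
    {r p : Set X} (hr : r ∈ P₂) (hp : p ∈ P₁) {x : X} (hxr : x ∈ r) (hxp : x ∈ p) : r ⊆ p := by
  obtain ⟨p', hp', hrp'⟩ := href r hr
  obtain ⟨b, _, hb⟩ := hP₁.2 x
  rwa [show p' = p from (hb p' ⟨hp', hrp' hxr⟩).trans (hb p ⟨hp, hxp⟩).symm] at hrp'

/-- The key "blocking" property: any partition coarser than `R` disagrees on every
`U`-large set with any partition finer than `P`. -/
def BlockProp (U : Ultrafilter X) (R P : Set (Set X)) : Prop :=
  ∀ P₀ P₂ : Set (Set X), Refines R P₀ → Refines P₂ P →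
    ∀ C ∈ U, restrictPart P₂ C ≠ restrictPart P₀ C

/-- Existence of a blocking refinement for every partition of size at most `2 ^ δ`. -/
def StepEx (δ : Cardinal.{u}) (U : Ultrafilter X) : Prop :=
  ∀ R : Set (Set X), Setoid.IsPartition R → #R ≤ 2 ^ δ →
    ∃ P : Set (Set X), Setoid.IsPartition P ∧ #P ≤ 2 ^ δ ∧ Refines P R ∧ BlockProp U R P

noncomputable def pick (δ : Cardinal.{u}) (U : Ultrafilter X) (hms : StepEx δ U)
    (R : Set (Set X)) : Set (Set X) :=
  @dite _ (Setoid.IsPartition R ∧ #R ≤ 2 ^ δ) (Classical.dec _)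
    (fun h => Classical.choose (hms R h.1 h.2)) (fun _ => {Set.univ})

theorem pick_spec (δ : Cardinal.{u}) (U : Ultrafilter X) (hms : StepEx δ U)
    {R : Set (Set X)} (h1 : Setoid.IsPartition R) (h2 : #R ≤ 2 ^ δ) :
    Setoid.IsPartition (pick δ U hms R) ∧ #(pick δ U hms R) ≤ 2 ^ δ ∧
      Refines (pick δ U hms R) R ∧ BlockProp U R (pick δ U hms R) := by
  unfold pick
  rw [dif_pos ⟨h1, h2⟩]
  exact Classical.choose_spec (hms R h1 h2)

/-- The transfinite sequence of partitions. -/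
noncomputable def seq (δ : Cardinal.{u}) (U : Ultrafilter X) (hms : StepEx δ U) :
    Ordinal.{u} → Set (Set X) :=
  Ordinal.lt_wf.fix fun o fam => pick δ U hms
    (commonRef fun i : o.ToType =>
      fam (((Ordinal.ToType.mk (o := o)).symm i : Set.Iio o) : Ordinal)
        ((Ordinal.ToType.mk (o := o)).symm i).2)

/-- The common refinement of all earlier partitions. -/
noncomputable def rfam (δ : Cardinal.{u}) (U : Ultrafilter X) (hms : StepEx δ U)
    (o : Ordinal.{u}) : Set (Set X) :=
  commonRef fun i : o.ToType =>
    seq δ U hms (((Ordinal.ToType.mk (o := o)).symm i : Set.Iio o) : Ordinal)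

theorem seq_eq (δ : Cardinal.{u}) (U : Ultrafilter X) (hms : StepEx δ U) (o : Ordinal.{u}) :
    seq δ U hms o = pick δ U hms (rfam δ U hms o) := by
  unfold seq
  rw [WellFounded.fix_eq]
  rfl

theorem rfam_refines (δ : Cardinal.{u}) (U : Ultrafilter X) (hms : StepEx δ U)
    {o o' : Ordinal.{u}} (h : o' < o) : Refines (rfam δ U hms o) (seq δ U hms o') := by
  have := commonRef_refines (fun i : o.ToType =>
      seq δ U hms (((Ordinal.ToType.mk (o := o)).symm i : Set.Iio o) : Ordinal))
    (Ordinal.ToType.mk (o := o) ⟨o', h⟩)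
  rwa [OrderIso.symm_apply_apply] at this

theorem seq_inv (δ : Cardinal.{u}) (U : Ultrafilter X) (hms : StepEx δ U) (hδ : ℵ₀ ≤ δ) :
    ∀ o : Ordinal.{u}, o ≤ δ.ord →
      Setoid.IsPartition (seq δ U hms o) ∧ #(seq δ U hms o) ≤ 2 ^ δ ∧
        Refines (seq δ U hms o) (rfam δ U hms o) ∧
        BlockProp U (rfam δ U hms o) (seq δ U hms o) := by
  intro o
  induction o using Ordinal.induction with
  | h o IH =>
    intro ho
    have hpart : ∀ i : o.ToType,
        Setoid.IsPartition (seq δ U hms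
          (((Ordinal.ToType.mk (o := o)).symm i : Set.Iio o) : Ordinal)) := fun i =>
      (IH _ ((Ordinal.ToType.mk (o := o)).symm i).2
        (le_of_lt (lt_of_lt_of_le ((Ordinal.ToType.mk (o := o)).symm i).2 ho))).1
    have hcard : ∀ i : o.ToType,
        #(seq δ U hms (((Ordinal.ToType.mk (o := o)).symm i : Set.Iio o) : Ordinal)) ≤ 2 ^ δ :=
      fun i =>
      (IH _ ((Ordinal.ToType.mk (o := o)).symm i).2
        (le_of_lt (lt_of_lt_of_le ((Ordinal.ToType.mk (o := o)).symm i).2 ho))).2.1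
    have hRpart : Setoid.IsPartition (rfam δ U hms o) := isPartition_commonRef hpart
    have hRcard : #(rfam δ U hms o) ≤ 2 ^ δ := by
      refine (mk_commonRef_le _ hcard).trans ?_
      rw [Cardinal.mk_toType]
      calc (2 ^ δ) ^ o.card ≤ (2 ^ δ) ^ δ :=
            power_le_power_left (power_ne_zero δ two_ne_zero)
              ((Ordinal.card_le_card ho).trans_eq (card_ord δ))
        _ = 2 ^ (δ * δ) := (power_mul).symm
        _ = 2 ^ δ := by rw [mul_eq_self hδ]
    rw [seq_eq]
    exact pick_spec δ U hms hRpart hRcard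

theorem seq_refines (δ : Cardinal.{u}) (U : Ultrafilter X) (hms : StepEx δ U) (hδ : ℵ₀ ≤ δ)
    {o o' : Ordinal.{u}} (ho : o ≤ δ.ord) (h : o' ≤ o) :
    Refines (seq δ U hms o) (seq δ U hms o') := by
  rcases eq_or_lt_of_le h with rfl | h
  · exact refines_refl _
  · exact refines_trans (seq_inv δ U hms hδ o ho).2.2.1 (rfam_refines δ U hms h)

theorem seq_disagree (δ : Cardinal.{u}) (U : Ultrafilter X) (hms : StepEx δ U) (hδ : ℵ₀ ≤ δ)
    {o o' : Ordinal.{u}} (ho : o ≤ δ.ord) (h : o' < o) :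
    ∀ C ∈ U, restrictPart (seq δ U hms o) C ≠ restrictPart (seq δ U hms o') C := by
  intro C hC
  have hsucc : o' + 1 ≤ o := by
    rw [Ordinal.add_one_eq_succ, Order.succ_le_iff]; exact h
  exact (seq_inv δ U hms hδ (o' + 1) (hsucc.trans ho)).2.2.2 (seq δ U hms o') (seq δ U hms o)
    (rfam_refines δ U hms (by rw [Ordinal.add_one_eq_succ]; exact Order.lt_succ o'))
    (seq_refines δ U hms hδ ho hsucc) C hC


end Silver

open Silver Cardinal Set in
/-- Silver's lemma: if `δ` is regular and `U` is `λ`-indecomposable for every cardinal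
`λ ∈ [δ, 2^δ]`, then there is a partition of `X` of size `< δ` that is maximal among
partitions of size at most `2^δ`. -/
theorem statement5 {X : Type u} (δ : Cardinal.{u}) (hreg : δ.ord.cof = δ)
    (U : Ultrafilter X)
    (hind : ∀ l : Cardinal.{u}, δ ≤ l → l ≤ 2 ^ δ → Indecomposable U l) :
    ∃ P : Set (Set X), Setoid.IsPartition P ∧ Cardinal.mk P < δ ∧
      ∀ Q : Set (Set X), Setoid.IsPartition Q → Cardinal.mk Q ≤ 2 ^ δ →
        Refines Q P → ∃ A ∈ U, restrictPart P A = restrictPart Q A := by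
  classical
  have hX : Nonempty X := Filter.nonempty_of_neBot (U : Filter X)
  rcases lt_or_ge δ ℵ₀ with hfin | hδ
  · -- degenerate small cases: they are contradictory
    exfalso
    rcases le_or_gt δ 1 with h1 | h2
    · have h12 : (1 : Cardinal.{u}) ≤ 2 ^ δ :=
        Cardinal.one_le_iff_ne_zero.2 (power_ne_zero δ two_ne_zero)
      have huniv : Setoid.IsPartition ({(univ : Set X)} : Set (Set X)) := by
        constructor
        · simp only [mem_singleton_iff]
          exact fun h => (Set.empty_ne_univ h).elim
        · intro a
          exact ⟨univ, ⟨rfl, trivial⟩, fun b hb => hb.1⟩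
      obtain ⟨A, hA, hlt⟩ := hind 1 h1 h12 ({(univ : Set X)} : Set (Set X)) huniv
        (by rw [mk_singleton])
      rw [lt_one_iff_zero, mk_eq_zero_iff] at hlt
      obtain ⟨a, ha⟩ := Ultrafilter.nonempty_of_mem hA
      exact hlt.false ⟨A ∩ univ, ⟨univ, rfl, rfl, nonempty_iff_ne_empty.1 ⟨a, ha, trivial⟩⟩⟩
    · obtain ⟨n, rfl⟩ := Cardinal.lt_aleph0.1 hfin
      rcases n with _ | m
      · simp at h2
      · rw [Cardinal.ord_nat] at hreg
        have : ((m + 1 : ℕ) : Ordinal.{u}) = Order.succ (m : Ordinal.{u}) := by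
          rw [Nat.cast_succ, Ordinal.add_one_eq_succ]
        rw [this, Ordinal.cof_succ] at hreg
        rw [← hreg] at h2
        exact absurd h2 (lt_irrefl 1)
  -- main case
  by_contra hcon
  push_neg at hcon
  -- hcon : ∀ P, IsPartition P → #P < δ → ∃ Q, IsPartition Q ∧ #Q ≤ 2^δ ∧ Refines Q P ∧
  --        ∀ A ∈ U, restrictPart P A ≠ restrictPart Q A
  have lemA : ∀ l : Cardinal.{u}, δ ≤ l → l ≤ 2 ^ δ → ∀ Q : Set (Set X),
      Setoid.IsPartition Q → #Q ≤ l → ∃ A ∈ U, #(restrictPart Q A) < δ := by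
    have ind : ∀ l : Cardinal.{u},
        (∀ l' : Cardinal.{u}, l' < l → (δ ≤ l' → l' ≤ 2 ^ δ → ∀ Q : Set (Set X),
          Setoid.IsPartition Q → #Q ≤ l' → ∃ A ∈ U, #(restrictPart Q A) < δ)) →
        (δ ≤ l → l ≤ 2 ^ δ → ∀ Q : Set (Set X),
          Setoid.IsPartition Q → #Q ≤ l → ∃ A ∈ U, #(restrictPart Q A) < δ) := by
      intro l IH hδl hl2 Q hQ hQl
      obtain ⟨A, hA, hAlt⟩ := hind l hδl hl2 Q hQ hQl
      rcases lt_or_ge #(restrictPart Q A) δ with h | h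
      · exact ⟨A, hA, h⟩
      · obtain ⟨B, hB, hBlt⟩ := IH #(restrictPart Q A) hAlt h (hAlt.le.trans hl2)
          (extendPart Q A) (isPartition_extendPart hQ A)
          ((mk_extendPart_le Q A).trans_eq (add_one_eq (hδ.trans h)))
        refine ⟨A ∩ B, Filter.inter_mem hA hB, ?_⟩
        calc #(restrictPart Q (A ∩ B)) = #(restrictPart (extendPart Q A) (A ∩ B)) := by
              rw [restrict_extendPart inter_subset_left]
          _ ≤ #(restrictPart (extendPart Q A) B) := mk_restrict_mono _ inter_subset_right
          _ < δ := hBlt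
    exact fun l => Cardinal.lt_wf.induction l ind
  have hms : StepEx δ U := by
    intro R hR hRc
    obtain ⟨B, hB, hRB⟩ := lemA (2 ^ δ) (cantor δ).le le_rfl R hR hRc
    have hSpart : Setoid.IsPartition (extendPart R B) := isPartition_extendPart hR B
    have hScard : #(extendPart R B) < δ :=
      lt_of_le_of_lt (mk_extendPart_le R B)
        (add_lt_of_lt hδ hRB (one_lt_aleph0.trans_le hδ))
    obtain ⟨Q, hQpart, hQcard, hQS, hQdis⟩ := hcon (extendPart R B) hSpart hScard
    refine ⟨commonRef (fun i : ULift.{u} Bool => cond i.down R Q), ?_, ?_, ?_, ?_⟩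
    · refine isPartition_commonRef ?_
      rintro ⟨b⟩; cases b
      · exact hQpart
      · exact hR
    · refine (mk_commonRef_le _ (κ := 2 ^ δ) ?_).trans ?_
      · rintro ⟨b⟩; cases b
        · exact hQcard
        · exact hRc
      · have h2 : #(ULift.{u} Bool) = 2 := by simp
        have h2δ : (2 : Cardinal.{u}) ≤ δ := by
          have := (Cardinal.nat_lt_aleph0 2).le.trans hδ
          exact_mod_cast this
        rw [h2, ← power_mul, Cardinal.mul_eq_left hδ h2δ two_ne_zero]
    · exact commonRef_refines _ (ULift.up true)
    · intro P₀ P₂ hRP₀ hP₂P C hC heq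
      have hD : C ∩ B ∈ U := Filter.inter_mem hC hB
      have h22 : restrictPart P₂ (C ∩ B) = restrictPart P₀ (C ∩ B) := by
        rw [← restrict_restrict (P := P₂) (inter_subset_left : C ∩ B ⊆ C),
          ← restrict_restrict (P := P₀) (inter_subset_left : C ∩ B ⊆ C), heq]
      have hSD : restrictPart (extendPart R B) (C ∩ B) = restrictPart R (C ∩ B) :=
        restrict_extendPart inter_subset_right
      have c1 : Refines (restrictPart P₂ (C ∩ B)) (restrictPart Q (C ∩ B)) :=
        refines_restrict (refines_trans hP₂P (commonRef_refines _ (ULift.up false))) _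
      have c2 : Refines (restrictPart Q (C ∩ B)) (restrictPart (extendPart R B) (C ∩ B)) :=
        refines_restrict hQS _
      have c3 : Refines (restrictPart (extendPart R B) (C ∩ B)) (restrictPart Q (C ∩ B)) := by
        rw [hSD]
        refine refines_trans (refines_restrict hRP₀ _) ?_
        rw [← h22]
        exact c1
      exact hQdis (C ∩ B) hD (partOn_antisymm (partOn_restrict hSpart _)
        (partOn_restrict hQpart _) c2 c3)
  -- the transfinite sequence leads to a contradiction
  have hGtop := seq_inv δ U hms hδ δ.ord le_rfl
  obtain ⟨A, hA, hT⟩ := lemA (2 ^ δ) (cantor δ).le le_rfl (seq δ U hms δ.ord) hGtop.1 hGtop.2.1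
  have hTpart : PartOn A (restrictPart (seq δ U hms δ.ord) A) := partOn_restrict hGtop.1 A
  have key : ∀ o : Ordinal.{u}, o < δ.ord → ∃ rr : Set X × Set X,
      rr.1 ∈ restrictPart (seq δ U hms δ.ord) A ∧ rr.2 ∈ restrictPart (seq δ U hms δ.ord) A ∧
      (∃ p ∈ seq δ U hms o, rr.1 ⊆ p ∧ rr.2 ⊆ p) ∧
      ¬∃ p ∈ seq δ U hms (o + 1), rr.1 ⊆ p ∧ rr.2 ⊆ p := by
    intro o ho
    have ho1 : o + 1 ≤ δ.ord := by
      rw [Ordinal.add_one_eq_succ, Order.succ_le_iff]; exact ho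
    have hGo := (seq_inv δ U hms hδ o ho.le).1
    have hGo1 := (seq_inv δ U hms hδ (o + 1) ho1).1
    have href : Refines (restrictPart (seq δ U hms (o + 1)) A) (restrictPart (seq δ U hms o) A) :=
      refines_restrict (seq_refines δ U hms hδ ho1
        (by rw [Ordinal.add_one_eq_succ]; exact (Order.le_succ o))) A
    have hne : restrictPart (seq δ U hms (o + 1)) A ≠ restrictPart (seq δ U hms o) A :=
      seq_disagree δ U hms hδ ho1 (by rw [Ordinal.add_one_eq_succ]; exact Order.lt_succ o) A hA
    obtain ⟨x, hx, y, hy, ⟨t, ht, hxt, hyt⟩, hno⟩ :=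
      exists_split (partOn_restrict hGo A) (partOn_restrict hGo1 A) href hne
    obtain ⟨p, hp, htp, -⟩ := ht
    have hxp : x ∈ p := (show x ∈ A ∩ p from htp ▸ hxt).2
    have hyp : y ∈ p := (show y ∈ A ∩ p from htp ▸ hyt).2
    obtain ⟨r, ⟨hrT, hxr⟩, -⟩ := hTpart.2.2 x hx
    obtain ⟨r', ⟨hrT', hyr'⟩, -⟩ := hTpart.2.2 y hy
    have hrefT : Refines (restrictPart (seq δ U hms δ.ord) A) (seq δ U hms o) :=
      refines_trans (restrict_refines_self _ _) (seq_refines δ U hms hδ le_rfl ho.le)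
    refine ⟨(r, r'), hrT, hrT', ⟨p, hp, piece_mono hGo hrefT hrT hp hxr hxp,
      piece_mono hGo hrefT hrT' hp hyr' hyp⟩, ?_⟩
    rintro ⟨p₂, hp₂, hrp₂, hr'p₂⟩
    exact hno (A ∩ p₂) ⟨p₂, hp₂, rfl, nonempty_iff_ne_empty.1 ⟨x, hx, hrp₂ hxr⟩⟩
      ⟨⟨hx, hrp₂ hxr⟩, hy, hr'p₂ hyr'⟩
  -- build an injection from δ.ord.ToType into pairs
  set T := restrictPart (seq δ U hms δ.ord) A with hTdef
  let od : δ.ord.ToType → Ordinal.{u} := fun i =>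
    (((Ordinal.ToType.mk (o := δ.ord)).symm i : Set.Iio δ.ord) : Ordinal)
  have hod : ∀ i, od i < δ.ord := fun i => ((Ordinal.ToType.mk (o := δ.ord)).symm i).2
  have hodinj : Function.Injective od := fun i j h =>
    (Ordinal.ToType.mk (o := δ.ord)).symm.injective (Subtype.coe_injective h)
  let F : δ.ord.ToType → ↥T × ↥T := fun i =>
    (⟨(Classical.choose (key (od i) (hod i))).1, (Classical.choose_spec (key (od i) (hod i))).1⟩,
     ⟨(Classical.choose (key (od i) (hod i))).2,
       (Classical.choose_spec (key (od i) (hod i))).2.1⟩)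
  have hmain : ∀ i j, od i < od j → F i ≠ F j := by
    intro i j hlt hij
    have spec_i := Classical.choose_spec (key (od i) (hod i))
    have spec_j := Classical.choose_spec (key (od j) (hod j))
    obtain ⟨p, hp, h1, h2⟩ := spec_j.2.2.1
    have hsucc : od i + 1 ≤ od j := by
      rw [Ordinal.add_one_eq_succ, Order.succ_le_iff]; exact hlt
    obtain ⟨q, hq, hpq⟩ := seq_refines δ U hms hδ (hod j).le hsucc p hp
    have e1 : (Classical.choose (key (od i) (hod i))).1 =
        (Classical.choose (key (od j) (hod j))).1 :=
      congrArg Subtype.val (congrArg Prod.fst hij)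
    have e2 : (Classical.choose (key (od i) (hod i))).2 =
        (Classical.choose (key (od j) (hod j))).2 :=
      congrArg Subtype.val (congrArg Prod.snd hij)
    exact spec_i.2.2.2 ⟨q, hq, by rw [e1]; exact h1.trans hpq, by rw [e2]; exact h2.trans hpq⟩
  have hFinj : Function.Injective F := by
    intro i j h
    rcases lt_trichotomy (od i) (od j) with hlt | heq | hgt
    · exact absurd h (hmain i j hlt)
    · exact hodinj heq
    · exact absurd h.symm (hmain j i hgt)
  have hle : δ ≤ #(↥T × ↥T) := by
    have := mk_le_of_injective hFinj
    rwa [mk_ord_toType] at this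
  have hlt2 : #(↥T × ↥T) < δ := by
    have := mul_lt_of_lt hδ hT hT
    simpa only [mk_prod, lift_id] using this
  exact absurd hle hlt2.not_ge
end
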